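/- Suppose for every γ > 0 there are only finitely many t ∈ ℤ₊ⁿ with δ(g_t Λ_y) ≤ e^{-γ(t₁+⋯+tₙ)}. Then y ∈ ℝⁿ is not very well multiplicatively approximable. -/

import Mathlib

open MeasureTheory

/-- `δ(Λ) = inf_{v ∈ Λ, v ≠ 0} ‖v‖_∞` (the sup-norm is the norm of the pi type). -/
noncomputable def latDelta {k : ℕ} (Lam : Set (Fin k → ℝ)) : ℝ :=
  ⨅ v : {v : Fin k → ℝ // v ∈ Lam ∧ v ≠ 0}, ‖v.1‖

/-- The lattice `Λ_y ⊂ ℝ^{n+1}` of vectors `(q·y + p, q₁, …, qₙ)`, `p ∈ ℤ`, `q ∈ ℤⁿ`. -/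
def lat {n : ℕ} (y : Fin n → ℝ) : Set (Fin (n + 1) → ℝ) :=
  {v | ∃ (p : ℤ) (q : Fin n → ℤ),
    v = Fin.cons ((∑ i, (q i : ℝ) * y i) + (p : ℝ)) (fun i => (q i : ℝ))}

/-- The action of `g_t = diag(e^t, e^{-t₁}, …, e^{-tₙ})` on `ℝ^{n+1}`, where `t = Σᵢ tᵢ`. -/
noncomputable def gAct {n : ℕ} (t : Fin n → ℝ) (v : Fin (n + 1) → ℝ) : Fin (n + 1) → ℝ :=
  Fin.cons (Real.exp (∑ i, t i) * v 0) (fun i => Real.exp (-t i) * v i.succ)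

/-- `y ∈ ℝⁿ` is very well multiplicatively approximable: for some `ε > 0` there are
infinitely many `q ∈ ℤⁿ` with `|q·y + p| · Π₊(q) ≤ Π₊(q)^{-ε}` for some `p ∈ ℤ`. -/
def VWMA {n : ℕ} (y : Fin n → ℝ) : Prop :=
  ∃ ε : ℝ, 0 < ε ∧
    {q : Fin n → ℤ | ∃ p : ℤ,
      |(∑ i, (q i : ℝ) * y i) + (p : ℝ)| * (∏ i, max |(q i : ℝ)| 1) ≤
        (∏ i, max |(q i : ℝ)| 1) ^ (-ε)}.Infinite

lemma latDelta_le_norm {k : ℕ} {Lam : Set (Fin k → ℝ)} {v : Fin k → ℝ}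
    (hv : v ∈ Lam) (hv0 : v ≠ 0) : latDelta Lam ≤ ‖v‖ := by
  unfold latDelta
  have hbdd : BddBelow (Set.range fun v : {v : Fin k → ℝ // v ∈ Lam ∧ v ≠ 0} => ‖v.1‖) := by
    refine ⟨0, ?_⟩
    rintro x ⟨w, rfl⟩
    exact norm_nonneg _
  exact ciInf_le hbdd ⟨v, hv, hv0⟩

lemma box_finite (n : ℕ) (M : Fin n → ℝ) :
    {q : Fin n → ℤ | ∀ i, |(q i : ℝ)| ≤ M i}.Finite := by
  have hsub : {q : Fin n → ℤ | ∀ i, |(q i : ℝ)| ≤ M i} ⊆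
      Set.pi Set.univ (fun i => Set.Icc (⌈-(M i)⌉) ⌊M i⌋) := by
    intro q hq i _
    have := abs_le.mp (hq i)
    exact ⟨Int.ceil_le.mpr (by linarith [this.1]), Int.le_floor.mpr this.2⟩
  exact (Set.Finite.pi fun _ => Set.finite_Icc _ _).subset hsub

lemma stmt13_arith1 {T L ε N : ℝ} (hε : 0 < ε) (hε1 : ε ≤ 1) (hN : 1 ≤ N)
    (hT : T ≤ L + (ε / 2) * L + N) (hL : 4 * N ≤ ε * L) (hT0 : 0 ≤ T) (hL0 : 0 ≤ L) :
    T - (1 + ε) * L ≤ -(ε / (8 * N)) * T := by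
  have h8 : (0:ℝ) < 8 * N := by linarith
  have heq : -(ε / (8 * N)) * T = (-(ε * T)) / (8 * N) := by
    field_simp
  rw [heq, le_div_iff₀ h8]
  nlinarith [mul_le_mul_of_nonneg_left hT (by linarith : (0:ℝ) ≤ 8 * N + ε),
    mul_nonneg (by linarith : (0:ℝ) ≤ N - 1) (mul_nonneg hε.le hL0),
    mul_nonneg (mul_nonneg hε.le hε.le) hL0,
    mul_nonneg (by linarith : (0:ℝ) ≤ N - 1) (by linarith : (0:ℝ) ≤ 4 * N)]

lemma stmt13_arith2 {T L ε N : ℝ} (hε : 0 < ε) (hε1 : ε ≤ 1) (hN : 1 ≤ N)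
    (hT : T ≤ L + (ε / 2) * L + N) (hL : 4 * N ≤ ε * L) (hL0 : 0 ≤ L) :
    (ε / (8 * N)) * T ≤ (ε / (2 * N)) * L := by
  have h8 : (0:ℝ) < 8 * N := by linarith
  have hTle : T ≤ 4 * L := by nlinarith
  have h1 : (ε / (8 * N)) * T ≤ (ε / (8 * N)) * (4 * L) :=
    mul_le_mul_of_nonneg_left hTle (by positivity)
  calc (ε / (8 * N)) * T ≤ (ε / (8 * N)) * (4 * L) := h1
    _ = (ε / (2 * N)) * L := by field_simp; ring

/-- if for every `γ > 0` only finitely many `t ∈ ℤ₊ⁿ` satisfy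
`δ(g_t Λ_y) ≤ e^{-γ(t₁+⋯+tₙ)}`, then `y` is not VWMA. -/
theorem stmt13 {n : ℕ} (y : Fin n → ℝ)
    (h : ∀ γ : ℝ, 0 < γ →
      {t : Fin n → ℕ |
        latDelta (gAct (fun i => (t i : ℝ)) '' lat y) ≤
          Real.exp (-γ * ∑ i, (t i : ℝ))}.Finite) :
    ¬ VWMA y := by
  rintro ⟨ε₀, hε₀, hS₀⟩
  rcases Nat.eq_zero_or_pos n with rfl | hn
  · exact hS₀ (Set.toFinite _)
  set ε : ℝ := min ε₀ 1 with hεdef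
  have hε : 0 < ε := lt_min hε₀ one_pos
  have hε1 : ε ≤ 1 := min_le_right _ _
  set N : ℝ := (n : ℝ) with hNdef
  have hN : 1 ≤ N := by rw [hNdef]; exact_mod_cast hn
  -- basic facts about the product
  have hm1 : ∀ (q : Fin n → ℤ) (i : Fin n), (1:ℝ) ≤ max |(q i : ℝ)| 1 :=
    fun q i => le_max_right _ _
  have hP1 : ∀ q : Fin n → ℤ, (1:ℝ) ≤ ∏ i, max |(q i : ℝ)| 1 := by
    intro q
    calc (1:ℝ) = ∏ _i : Fin n, (1:ℝ) := by simp
      _ ≤ ∏ i, max |(q i : ℝ)| 1 :=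
          Finset.prod_le_prod (fun i _ => zero_le_one) (fun i _ => hm1 q i)
  have hP0 : ∀ q : Fin n → ℤ, (0:ℝ) < ∏ i, max |(q i : ℝ)| 1 :=
    fun q => lt_of_lt_of_le one_pos (hP1 q)
  set L : (Fin n → ℤ) → ℝ := fun q => Real.log (∏ i, max |(q i : ℝ)| 1) with hLdef
  have hL0 : ∀ q, 0 ≤ L q := fun q => Real.log_nonneg (hP1 q)
  have hmP : ∀ (q : Fin n → ℤ) (i : Fin n), max |(q i : ℝ)| 1 ≤ ∏ j, max |(q j : ℝ)| 1 := by
    intro q i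
    have h1 : (∏ j, if j = i then max |(q j : ℝ)| 1 else 1) ≤ ∏ j, max |(q j : ℝ)| 1 :=
      Finset.prod_le_prod (fun j _ => by split <;> [positivity; norm_num])
        (fun j _ => by split <;> [exact le_rfl; exact hm1 q j])
    simpa using h1
  have hLsum : ∀ q : Fin n → ℤ, ∑ i, Real.log (max |(q i : ℝ)| 1) = L q := fun q =>
    (Real.log_prod (fun i _ => ne_of_gt (lt_of_lt_of_le one_pos (hm1 q i)))).symm
  -- reduce to exponent ε
  set S : Set (Fin n → ℤ) := {q : Fin n → ℤ | ∃ p : ℤ,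
      |(∑ i, (q i : ℝ) * y i) + (p : ℝ)| * (∏ i, max |(q i : ℝ)| 1) ≤
        (∏ i, max |(q i : ℝ)| 1) ^ (-ε)} with hSdef
  have hS : S.Infinite := by
    refine Set.Infinite.mono ?_ hS₀
    rintro q ⟨p, hp⟩
    exact ⟨p, hp.trans (Real.rpow_le_rpow_of_exponent_le (hP1 q)
      (by simp only [neg_le_neg_iff]; exact min_le_left _ _))⟩
  set c : ℝ := ε / (2 * N) with hcdef
  set γ : ℝ := ε / (8 * N) with hγdef
  have hN0 : (0:ℝ) < N := lt_of_lt_of_le one_pos hN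
  have hc0 : 0 < c := by positivity
  have hγ0 : 0 < γ := by positivity
  -- the integer times
  set t : (Fin n → ℤ) → Fin n → ℕ :=
    fun q i => ⌈Real.log (max |(q i : ℝ)| 1) + c * L q⌉₊ with htdef
  have harg : ∀ q i, 0 ≤ Real.log (max |(q i : ℝ)| 1) + c * L q := fun q i =>
    add_nonneg (Real.log_nonneg (hm1 q i)) (mul_nonneg hc0.le (hL0 q))
  have htlo : ∀ q i, Real.log (max |(q i : ℝ)| 1) + c * L q ≤ (t q i : ℝ) :=
    fun q i => Nat.le_ceil _
  have hthi : ∀ q i, (t q i : ℝ) < Real.log (max |(q i : ℝ)| 1) + c * L q + 1 :=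
    fun q i => Nat.ceil_lt_add_one (harg q i)
  have hTlo : ∀ q, L q + N * (c * L q) ≤ ∑ i, (t q i : ℝ) := by
    intro q
    have : ∑ i, (Real.log (max |(q i : ℝ)| 1) + c * L q) ≤ ∑ i, (t q i : ℝ) :=
      Finset.sum_le_sum fun i _ => htlo q i
    calc L q + N * (c * L q)
        = ∑ i, (Real.log (max |(q i : ℝ)| 1) + c * L q) := by
          rw [Finset.sum_add_distrib, hLsum q, Finset.sum_const, Finset.card_univ,
            Fintype.card_fin, nsmul_eq_mul, hNdef]
      _ ≤ _ := this
  have hThi : ∀ q, ∑ i, (t q i : ℝ) ≤ L q + N * (c * L q) + N := by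
    intro q
    have : ∑ i, (t q i : ℝ) ≤ ∑ i, (Real.log (max |(q i : ℝ)| 1) + c * L q + 1) :=
      Finset.sum_le_sum fun i _ => (hthi q i).le
    calc ∑ i, (t q i : ℝ) ≤ ∑ i, (Real.log (max |(q i : ℝ)| 1) + c * L q + 1) := this
      _ = L q + N * (c * L q) + N := by
          rw [Finset.sum_add_distrib, Finset.sum_add_distrib, hLsum q, Finset.sum_const,
            Finset.sum_const, Finset.card_univ, Fintype.card_fin, nsmul_eq_mul,
            nsmul_eq_mul, mul_one, hNdef]
  have hNcL : ∀ q, N * (c * L q) = (ε / 2) * L q := by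
    intro q
    rw [hcdef]
    field_simp
  -- the key claim
  have hkey : ∀ q ∈ S, 4 * N / ε ≤ L q → latDelta
      (gAct (fun i => ((t q i : ℕ) : ℝ)) '' lat y) ≤
        Real.exp (-γ * ∑ i, ((t q i : ℕ) : ℝ)) := by
    intro q hq hLq
    obtain ⟨p, hp⟩ := hq
    have h4N : 4 * N ≤ ε * L q := by
      rw [div_le_iff₀ hε] at hLq; linarith [hLq]
    have hq0 : q ≠ 0 := by
      intro h0
      have hL0' : L q = 0 := by
        rw [hLdef]; simp [h0]
      rw [hL0'] at hLq
      have : 0 < 4 * N / ε := by positivity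
      linarith
    obtain ⟨i₀, hi₀⟩ : ∃ i, q i ≠ 0 := by
      by_contra hcon; push_neg at hcon; exact hq0 (funext hcon)
    set A : ℝ := (∑ i, (q i : ℝ) * y i) + (p : ℝ) with hAdef
    set v : Fin (n + 1) → ℝ := Fin.cons A (fun i => (q i : ℝ)) with hvdef
    have hvmem : v ∈ lat y := ⟨p, q, rfl⟩
    set T : ℝ := ∑ i, ((t q i : ℕ) : ℝ) with hTdef
    have hT0 : 0 ≤ T := Finset.sum_nonneg fun i _ => Nat.cast_nonneg _
    have hThi' : T ≤ L q + (ε / 2) * L q + N := by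
      have := hThi q; rw [hNcL q] at this; exact this
    -- bound on |A|
    have hPexp : (∏ i, max |(q i : ℝ)| 1) = Real.exp (L q) := (Real.exp_log (hP0 q)).symm
    have hA : |A| ≤ Real.exp (-(1 + ε) * L q) := by
      have h1 : |A| ≤ (∏ i, max |(q i : ℝ)| 1) ^ (-ε) / (∏ i, max |(q i : ℝ)| 1) :=
        (le_div_iff₀ (hP0 q)).mpr hp
      have h2 : (∏ i, max |(q i : ℝ)| 1) ^ (-ε) = Real.exp (-ε * L q) := by
        rw [Real.rpow_def_of_pos (hP0 q)]; ring_nf; rw [mul_comm]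
      calc |A| ≤ (∏ i, max |(q i : ℝ)| 1) ^ (-ε) / (∏ i, max |(q i : ℝ)| 1) := h1
        _ = Real.exp (-ε * L q) / Real.exp (L q) := by rw [h2, hPexp]
        _ = Real.exp (-(1 + ε) * L q) := by rw [← Real.exp_sub]; ring_nf
    -- the moved vector is nonzero
    have hgv0 : gAct (fun i => ((t q i : ℕ) : ℝ)) v ≠ 0 := by
      intro h0
      have hco := congrFun h0 i₀.succ
      simp only [gAct, Fin.cons_succ, hvdef, Pi.zero_apply] at hco
      rcases mul_eq_zero.mp hco with hh | hh
      · exact Real.exp_ne_zero _ hh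
      · exact hi₀ (by exact_mod_cast hh)
    refine (latDelta_le_norm (Set.mem_image_of_mem _ hvmem) hgv0).trans ?_
    rw [pi_norm_le_iff_of_nonneg (Real.exp_nonneg _)]
    intro j
    induction j using Fin.cases with
    | zero =>
        have : gAct (fun i => ((t q i : ℕ) : ℝ)) v 0 = Real.exp T * A := by
          simp only [gAct, Fin.cons_zero, hvdef, hTdef]
        rw [this, Real.norm_eq_abs, abs_mul, abs_of_pos (Real.exp_pos _)]
        calc Real.exp T * |A| ≤ Real.exp T * Real.exp (-(1 + ε) * L q) :=
              mul_le_mul_of_nonneg_left hA (Real.exp_nonneg _)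
          _ = Real.exp (T - (1 + ε) * L q) := by rw [← Real.exp_add]; ring_nf
          _ ≤ Real.exp (-γ * T) := by
              apply Real.exp_le_exp.mpr
              have := stmt13_arith1 hε hε1 hN hThi' h4N hT0 (hL0 q)
              rw [hγdef]; linarith [this]
    | succ i =>
        have : gAct (fun i => ((t q i : ℕ) : ℝ)) v i.succ =
            Real.exp (-((t q i : ℕ) : ℝ)) * (q i : ℝ) := by
          simp only [gAct, Fin.cons_succ, hvdef]
        rw [this, Real.norm_eq_abs, abs_mul, abs_of_pos (Real.exp_pos _)]
        have hqi : |(q i : ℝ)| ≤ Real.exp ((t q i : ℝ) - c * L q) := by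
          have h1 : Real.log (max |(q i : ℝ)| 1) ≤ (t q i : ℝ) - c * L q := by
            linarith [htlo q i]
          calc |(q i : ℝ)| ≤ max |(q i : ℝ)| 1 := le_max_left _ _
            _ = Real.exp (Real.log (max |(q i : ℝ)| 1)) :=
                (Real.exp_log (lt_of_lt_of_le one_pos (hm1 q i))).symm
            _ ≤ _ := Real.exp_le_exp.mpr h1
        calc Real.exp (-((t q i : ℕ) : ℝ)) * |(q i : ℝ)|
            ≤ Real.exp (-((t q i : ℕ) : ℝ)) * Real.exp ((t q i : ℝ) - c * L q) :=
              mul_le_mul_of_nonneg_left hqi (Real.exp_nonneg _)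
          _ = Real.exp (-(c * L q)) := by rw [← Real.exp_add]; ring_nf
          _ ≤ Real.exp (-γ * T) := by
              apply Real.exp_le_exp.mpr
              have := stmt13_arith2 hε hε1 hN hThi' h4N (hL0 q)
              rw [hγdef, hcdef] at *
              linarith [this]
  -- conclude
  have hBfin := h γ hγ0
  have hsmall : {q : Fin n → ℤ | L q < 4 * N / ε}.Finite := by
    apply (box_finite n (fun _ => Real.exp (4 * N / ε))).subset
    intro q hq i
    calc |(q i : ℝ)| ≤ max |(q i : ℝ)| 1 := le_max_left _ _
      _ ≤ ∏ j, max |(q j : ℝ)| 1 := hmP q i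
      _ = Real.exp (L q) := (Real.exp_log (hP0 q)).symm
      _ ≤ Real.exp (4 * N / ε) := Real.exp_le_exp.mpr (le_of_lt hq)
  have hS' : (S \ {q : Fin n → ℤ | L q < 4 * N / ε}).Infinite := hS.diff hsmall
  apply hS'
  have hsub : S \ {q : Fin n → ℤ | L q < 4 * N / ε} ⊆
      ⋃ b ∈ {t : Fin n → ℕ |
        latDelta (gAct (fun i => (t i : ℝ)) '' lat y) ≤
          Real.exp (-γ * ∑ i, (t i : ℝ))},
        {q : Fin n → ℤ | ∀ i, |(q i : ℝ)| ≤ Real.exp ((b i : ℝ))} := by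
    rintro q ⟨hq1, hq2⟩
    simp only [Set.mem_setOf_eq, not_lt] at hq2
    refine Set.mem_biUnion (hkey q hq1 hq2) ?_
    intro i
    calc |(q i : ℝ)| ≤ max |(q i : ℝ)| 1 := le_max_left _ _
      _ = Real.exp (Real.log (max |(q i : ℝ)| 1)) :=
          (Real.exp_log (lt_of_lt_of_le one_pos (hm1 q i))).symm
      _ ≤ Real.exp ((t q i : ℝ)) := Real.exp_le_exp.mpr
          (by linarith [htlo q i, mul_nonneg hc0.le (hL0 q)])
  exact (hBfin.biUnion fun b _ => box_finite n fun i => Real.exp ((b i : ℝ))).subset hsub
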